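/- (Optimisation landscape of unit-depth QAOA for decision problems.) Fix n : ℕ, real angles β, γ, and a finite set T of bit strings (Fin n → Bool). Let C_T be the diagonal complex matrix with entry 1 at each z ∈ T and 0 otherwise, X the matrix with X z k = 1 if hammingDist z k = 1 and 0 otherwise, u the vector with every entry ((2:ℂ)^n)^(−1/2), and ψ := Matrix.exp(−(i·β)•X) *ᵥ (Matrix.exp(−(i·γ)•C_T) *ᵥ u). Then the expectation value F₁(β,γ) := ⟨ψ, C_T ψ⟩ = (star ψ) ⬝ᵥ (C_T *ᵥ ψ) satisfies F₁(β,γ) = (1/2^n) · Σ_{k ∈ T} ‖c_k(β,γ)‖², where c_k(β,γ) := Σ_{d=0}^{n} ( (#_d(k) : ℂ)·(exp(−i·γ)−1) + (n.choose d : ℂ) ) · f_n(β,d), ‖·‖² denotes Complex.normSq, and the right-hand side is a nonnegative real number coerced to ℂ. -/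

import Mathlib

open Complex Matrix

namespace QAOAaux
open NormedSpace
open scoped Function

variable {n : ℕ}

/-- Flip bit `j`. -/
def F (j : Fin n) (k : Fin n → Bool) : Fin n → Bool := Function.update k j (!(k j))

lemma F_apply_self (j : Fin n) (k : Fin n → Bool) : F j k j = !(k j) := by
  simp [F]

lemma F_apply_ne (j : Fin n) (k : Fin n → Bool) {i : Fin n} (h : i ≠ j) : F j k i = k i := by
  simp [F, Function.update_of_ne h]

lemma F_invol (j : Fin n) : Function.Involutive (F j) := by
  intro k; funext i
  rcases eq_or_ne i j with rfl | h
  · simp [F]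
  · simp [F, Function.update_of_ne h]

lemma F_comm (i j : Fin n) (k : Fin n → Bool) : F i (F j k) = F j (F i k) := by
  rcases eq_or_ne i j with rfl | hij
  · rfl
  · funext l
    rcases eq_or_ne l i with rfl | hli
    · rw [F_apply_self, F_apply_ne _ _ hij, F_apply_ne _ _ hij, F_apply_self]
    · rcases eq_or_ne l j with rfl | hlj
      · rw [F_apply_ne _ _ hli, F_apply_self, F_apply_self, F_apply_ne _ _ hli]
      · rw [F_apply_ne _ _ hli, F_apply_ne _ _ hlj, F_apply_ne _ _ hlj, F_apply_ne _ _ hli]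

/-- The single-bit-flip matrix. -/
def Xj (j : Fin n) : Matrix (Fin n → Bool) (Fin n → Bool) ℂ :=
  Matrix.of fun z k => if z = F j k then 1 else 0

lemma Xj_mul (j : Fin n) (M : Matrix (Fin n → Bool) (Fin n → Bool) ℂ)
    (z k : Fin n → Bool) : (Xj j * M) z k = M (F j z) k := by
  rw [Matrix.mul_apply]
  have h : ∀ w, (z = F j w) = (w = F j z) := by
    intro w
    rw [eq_iff_iff]
    constructor
    · rintro rfl; exact (F_invol j w).symm
    · rintro rfl; exact (F_invol j z).symm
  simp only [Xj, Matrix.of_apply, h, ite_mul, one_mul, zero_mul]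
  exact Finset.sum_ite_eq' _ _ _ |>.trans (by simp)

lemma Xj_sq (j : Fin n) : Xj j * Xj j = 1 := by
  ext z k
  rw [Xj_mul]
  simp only [Xj, Matrix.of_apply, Matrix.one_apply]
  congr 1
  rw [eq_iff_iff]
  exact ⟨fun h => (F_invol j).injective h, by rintro rfl; rfl⟩

lemma Xj_comm (i j : Fin n) : Commute (Xj i) (Xj j) := by
  ext z k
  rw [Xj_mul, Xj_mul]
  show (if F i z = F j k then (1:ℂ) else 0) = if F j z = F i k then 1 else 0
  congr 1
  simp only [eq_iff_iff]
  constructor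
  · intro h
    have : z = F i (F j k) := by
      have := congrArg (F i) h
      rwa [F_invol i z] at this
    rw [this, F_comm, F_invol]
  · intro h
    have : z = F j (F i k) := by
      have := congrArg (F j) h
      rwa [F_invol j z] at this
    rw [this, F_comm, F_invol]


lemma eq_F_iff (z k : Fin n → Bool) (j : Fin n) :
    z = F j k ↔ (Finset.univ.filter fun i => z i ≠ k i) = {j} := by
  constructor
  · rintro rfl
    ext i
    simp only [Finset.mem_filter, Finset.mem_univ, true_and, Finset.mem_singleton]
    rcases eq_or_ne i j with rfl | h
    · simp [F_apply_self]
    · simp [F_apply_ne _ _ h, h]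
  · intro h
    funext i
    rcases eq_or_ne i j with rfl | hi
    · have : i ∈ Finset.univ.filter fun i' => z i' ≠ k i' := by
        rw [h]; exact Finset.mem_singleton_self i
      have hne : z i ≠ k i := (Finset.mem_filter.mp this).2
      rw [F_apply_self]
      revert hne; cases z i <;> cases k i <;> decide
    · have : i ∉ Finset.univ.filter fun i' => z i' ≠ k i' := by
        rw [h]; simpa using hi
      have heq : z i = k i := by
        by_contra hc
        exact this (Finset.mem_filter.mpr ⟨Finset.mem_univ _, hc⟩)
      rw [F_apply_ne _ _ hi, heq]

lemma card_filter_F (z k : Fin n → Bool) :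
    (Finset.univ.filter fun j => z = F j k).card
      = if hammingDist z k = 1 then 1 else 0 := by
  have hd : hammingDist z k = (Finset.univ.filter fun i => z i ≠ k i).card := rfl
  split_ifs with h
  · rw [hd] at h
    obtain ⟨a, ha⟩ := Finset.card_eq_one.mp h
    have : (Finset.univ.filter fun j => z = F j k) = {a} := by
      ext j
      simp only [Finset.mem_filter, Finset.mem_univ, true_and, Finset.mem_singleton,
        eq_F_iff z k j, ha]
      constructor
      · intro hj; exact Finset.singleton_injective hj.symm
      · rintro rfl; rfl
    rw [this, Finset.card_singleton]
  · rw [Finset.card_eq_zero, Finset.filter_eq_empty_iff]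
    intro j _ hj
    rw [eq_F_iff] at hj
    rw [hd, hj, Finset.card_singleton] at h
    exact h rfl

lemma X_eq :
    (Matrix.of fun z k : Fin n → Bool => if hammingDist z k = 1 then (1:ℂ) else 0)
      = ∑ j, Xj j := by
  ext z k
  rw [Matrix.sum_apply]
  simp only [Xj, Matrix.of_apply]
  rw [Finset.sum_boole, card_filter_F]
  split_ifs <;> simp


lemma exp_invol {m : Type*} [Fintype m] [DecidableEq m] (A : Matrix m m ℂ)
    (h : A * A = 1) (β : ℝ) :
    NormedSpace.exp ((-(Complex.I * β)) • A)
      = (Real.cos β : ℂ) • (1 : Matrix m m ℂ) + (-(Complex.I * Real.sin β)) • A := by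
  letI : SeminormedRing (Matrix m m ℂ) := Matrix.linftyOpSemiNormedRing
  letI : NormedRing (Matrix m m ℂ) := Matrix.linftyOpNormedRing
  letI : NormedAlgebra ℂ (Matrix m m ℂ) := Matrix.linftyOpNormedAlgebra
  rw [exp_eq_tsum ℂ]
  refine HasSum.tsum_eq ?_
  set c : ℂ := -(Complex.I * β) with hc
  have hA2 : A ^ 2 = 1 := by rw [pow_two, h]
  have hAe : ∀ k : ℕ, A ^ (2 * k) = 1 := fun k => by rw [pow_mul, hA2, one_pow]
  have hc2 : c ^ 2 = -((β:ℂ)^2) := by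
    rw [show c^2 = Complex.I^2 * (β:ℂ)^2 by rw [hc]; ring, Complex.I_sq]; ring
  have hce : ∀ k : ℕ, c ^ (2 * k) = (-1)^k * (β:ℂ)^(2*k) := fun k => by
    rw [pow_mul, hc2, neg_pow, ← pow_mul]
  refine HasSum.even_add_odd ?_ ?_
  · have hcos := HasSum.smul_const (Complex.hasSum_cos (β:ℂ)) (1 : Matrix m m ℂ)
    rw [← Complex.ofReal_cos] at hcos
    convert hcos using 2 with k
    · rfl
    rw [smul_pow, hAe, smul_smul]
    congr 1
    rw [hce]
    field_simp
  · have hsin := HasSum.smul_const ((Complex.hasSum_sin (β:ℂ)).mul_left (-Complex.I)) A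
    have hval : (-Complex.I * Complex.sin (β:ℂ)) • A = (-(Complex.I * Real.sin β)) • A := by
      rw [← Complex.ofReal_sin]; ring_nf
    rw [hval] at hsin
    convert hsin using 2 with k
    · rfl
    rw [smul_pow, pow_succ A, hAe, one_mul, smul_smul]
    congr 1
    rw [pow_succ c, hce, hc]
    field_simp
    ring


lemma Aj_comm (cc s : ℂ) (S : Finset (Fin n)) :
    (S : Set (Fin n)).Pairwise
      (Commute on fun j => cc • (1 : Matrix (Fin n → Bool) (Fin n → Bool) ℂ) + s • Xj j) := by
  intro i _ j _ _
  dsimp only [Function.onFun]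
  have hBiBj : Commute (s • Xj i) (s • Xj j) := ((Xj_comm i j).smul_right s).smul_left s
  have hBiA : Commute (s • Xj i) (cc • (1 : Matrix (Fin n → Bool) (Fin n → Bool) ℂ)) :=
    ((Commute.one_right (Xj i)).smul_right cc).smul_left s
  have hABj : Commute (cc • (1 : Matrix (Fin n → Bool) (Fin n → Bool) ℂ)) (s • Xj j) :=
    ((Commute.one_left (Xj j)).smul_right s).smul_left cc
  exact ((Commute.refl _).add_left hBiA).add_right (hABj.add_left hBiBj)

lemma noncommProd_entry (cc s : ℂ) (S : Finset (Fin n)) (z k : Fin n → Bool) :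
    (S.noncommProd (fun j => cc • (1 : Matrix (Fin n → Bool) (Fin n → Bool) ℂ) + s • Xj j)
        (Aj_comm cc s S)) z k
      = (∏ j ∈ Sᶜ, if z j = k j then (1:ℂ) else 0)
          * ∏ j ∈ S, (if z j = k j then cc else s) := by
  induction S using Finset.induction_on generalizing z with
  | empty =>
    rw [Finset.noncommProd_empty]
    simp only [Finset.compl_empty, Finset.prod_empty, mul_one, Finset.prod_boole]
    rw [Matrix.one_apply]
    have : (z = k) ↔ (∀ j ∈ Finset.univ, z j = k j) := by
      simp [funext_iff]
    split_ifs with h1 h2 <;> simp_all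
  | @insert a S ha ih =>
    rw [Finset.noncommProd_insert_of_notMem _ _ _ _ ha]
    rw [Matrix.add_mul, Matrix.smul_mul, Matrix.one_mul, Matrix.smul_mul,
      Matrix.add_apply, Matrix.smul_apply, Matrix.smul_apply, smul_eq_mul, smul_eq_mul,
      Xj_mul, ih z, ih (F a z)]
    have haSc : a ∈ Sᶜ := Finset.mem_compl.mpr ha
    have hSc : Sᶜ = insert a ((insert a S)ᶜ) := by
      rw [Finset.compl_insert, Finset.insert_erase haSc]
    have hnotmem : a ∉ (insert a S)ᶜ := by
      rw [Finset.compl_insert]; exact Finset.notMem_erase a Sᶜ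
    rw [hSc, Finset.prod_insert hnotmem, Finset.prod_insert hnotmem, Finset.prod_insert ha]
    have hE : (∏ j ∈ (insert a S)ᶜ, if F a z j = k j then (1:ℂ) else 0)
        = ∏ j ∈ (insert a S)ᶜ, if z j = k j then (1:ℂ) else 0 := by
      refine Finset.prod_congr rfl fun j hj => ?_
      have hja : j ≠ a := by
        rw [Finset.compl_insert] at hj; exact Finset.ne_of_mem_erase hj
      rw [F_apply_ne _ _ hja]
    have hG : (∏ j ∈ S, if F a z j = k j then cc else s)
        = ∏ j ∈ S, if z j = k j then cc else s := by
      refine Finset.prod_congr rfl fun j hj => ?_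
      have hja : j ≠ a := fun h => ha (h ▸ hj)
      rw [F_apply_ne _ _ hja]
    rw [hE, hG, F_apply_self]
    cases hza : z a <;> cases hka : k a <;> simp <;> ring

lemma exp_X_apply (β : ℝ) (z k : Fin n → Bool) :
    NormedSpace.exp ((-(Complex.I * β)) •
        (Matrix.of fun z k : Fin n → Bool => if hammingDist z k = 1 then (1:ℂ) else 0)) z k
      = (Real.cos β : ℂ) ^ (n - hammingDist z k)
          * (-(Complex.I * Real.sin β)) ^ (hammingDist z k) := by
  have hcomm : ((Finset.univ : Finset (Fin n)) : Set (Fin n)).Pairwise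
      (Commute on fun j => (-(Complex.I * (β:ℂ))) • Xj j) := by
    intro i _ j _ _
    exact ((Xj_comm i j).smul_right _).smul_left _
  rw [X_eq, Finset.smul_sum, Matrix.exp_sum_of_commute Finset.univ _ hcomm]
  have hstep : (Finset.univ.noncommProd (fun j => NormedSpace.exp ((-(Complex.I * (β:ℂ))) • Xj j))
        (fun _ hi _ hj h => ((hcomm.of_refl hi hj).exp)))
      = Finset.univ.noncommProd
          (fun j => (Real.cos β : ℂ) • (1 : Matrix (Fin n → Bool) (Fin n → Bool) ℂ)
            + (-(Complex.I * Real.sin β)) • Xj j) (Aj_comm _ _ _) := by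
    refine Finset.noncommProd_congr rfl (fun x _ => exp_invol (Xj x) (Xj_sq x) β) _
  rw [hstep, noncommProd_entry]
  rw [Finset.compl_univ, Finset.prod_empty, one_mul]
  rw [Finset.prod_ite, Finset.prod_const, Finset.prod_const]
  have hd : hammingDist z k = (Finset.univ.filter fun i => z i ≠ k i).card := rfl
  have hcards := Finset.card_filter_add_card_filter_not
    (s := (Finset.univ : Finset (Fin n))) (p := fun j => z j = k j)
  rw [Finset.card_univ, Fintype.card_fin] at hcards
  have h1 : (Finset.univ.filter fun j => ¬ z j = k j).card = hammingDist z k := by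
    rw [hd]
  have h2 : (Finset.univ.filter fun j => z j = k j).card = n - hammingDist z k := by
    omega
  rw [h1, h2]


lemma card_hammingDist_eq (k : Fin n → Bool) (d : ℕ) :
    (Finset.univ.filter fun z : Fin n → Bool => hammingDist z k = d).card = n.choose d := by
  have h : n.choose d = ((Finset.univ : Finset (Fin n)).powersetCard d).card := by
    rw [Finset.card_powersetCard, Finset.card_univ, Fintype.card_fin]
  rw [h]
  refine Finset.card_nbij' (i := fun z => Finset.univ.filter fun j => z j ≠ k j)
    (j := fun S => fun j => if j ∈ S then !(k j) else k j) ?_ ?_ ?_ ?_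
  · intro z hz
    rw [Finset.mem_coe, Finset.mem_powersetCard]
    refine ⟨Finset.filter_subset _ _ |>.trans (by simp), ?_⟩
    exact (Finset.mem_filter.mp hz).2
  · intro S hS
    rw [Finset.mem_coe, Finset.mem_filter]
    rw [Finset.mem_coe, Finset.mem_powersetCard] at hS
    refine ⟨Finset.mem_univ _, ?_⟩
    have : (Finset.univ.filter fun j => (if j ∈ S then !(k j) else k j) ≠ k j) = S := by
      ext j
      simp only [Finset.mem_filter, Finset.mem_univ, true_and]
      by_cases hj : j ∈ S <;> simp [hj]
    show hammingDist _ k = d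
    rw [hammingDist]
    simp only [this]
    exact hS.2
  · intro z hz
    funext j
    by_cases hj : z j = k j
    · simp [hj]
    · simp only [Finset.mem_filter, Finset.mem_univ, true_and]
      rw [if_pos hj]
      revert hj; cases z j <;> cases k j <;> decide
  · intro S hS
    ext j
    simp only [Finset.mem_filter, Finset.mem_univ, true_and]
    by_cases hj : j ∈ S <;> simp [hj]

lemma sum_fn (φ : ℕ → ℂ) (k : Fin n → Bool) (s : Finset (Fin n → Bool)) :
    ∑ z ∈ s, φ (hammingDist z k)
      = ∑ d ∈ Finset.range (n+1), ((s.filter fun z => hammingDist z k = d).card : ℂ) * φ d := by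
  rw [← Finset.sum_fiberwise_of_maps_to (g := fun z => hammingDist z k)
      (t := Finset.range (n+1)) (fun z _ => by
        rw [Finset.mem_range, Nat.lt_succ_iff]
        exact le_trans hammingDist_le_card_fintype (Fintype.card_fin n).le)]
  refine Finset.sum_congr rfl fun d _ => ?_
  rw [Finset.sum_congr rfl (fun z hz => by rw [(Finset.mem_filter.mp hz).2]),
    Finset.sum_const, nsmul_eq_mul]

end QAOAaux

open QAOAaux in
theorem qaoa_landscape (n : ℕ) (β γ : ℝ) (T : Finset (Fin n → Bool)) :
    let C_T : Matrix (Fin n → Bool) (Fin n → Bool) ℂ :=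
      Matrix.diagonal (fun z => if z ∈ T then 1 else 0)
    let X : Matrix (Fin n → Bool) (Fin n → Bool) ℂ :=
      Matrix.of (fun z k => if hammingDist z k = 1 then (1 : ℂ) else 0)
    let u : (Fin n → Bool) → ℂ := fun _ => ((2 : ℂ) ^ n) ^ (-(1 / 2 : ℂ))
    let ψ : (Fin n → Bool) → ℂ :=
      NormedSpace.exp ((-(Complex.I * β)) • X) *ᵥ
        (NormedSpace.exp ((-(Complex.I * γ)) • C_T) *ᵥ u)
    let fn : ℝ → ℕ → ℂ := fun β d =>
      (Real.cos β : ℂ) ^ (n - d) * (-(Complex.I * Real.sin β)) ^ d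
    let c : (Fin n → Bool) → ℂ := fun k =>
      ∑ d ∈ Finset.range (n + 1),
        (((T.filter (fun z => hammingDist z k = d)).card : ℂ) *
            (Complex.exp (-(Complex.I * γ)) - 1) + (n.choose d : ℂ)) * fn β d
    (star ψ) ⬝ᵥ (C_T *ᵥ ψ) =
      (((1 / 2 ^ n : ℝ) * ∑ k ∈ T, Complex.normSq (c k) : ℝ) : ℂ) := by
  intro C_T X u ψ fn c
  have hC : C_T = Matrix.diagonal (fun z => if z ∈ T then (1:ℂ) else 0) := rfl
  have hX : X = Matrix.of (fun z k => if hammingDist z k = 1 then (1:ℂ) else 0) := rfl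
  set q : ℂ := Complex.exp (-(Complex.I * ↑γ)) with hq
  set r0 : ℝ := ((2:ℝ)^n) ^ (-(1/2) : ℝ) with hr0
  have hu : ∀ z, u z = (r0 : ℂ) := by
    intro z
    show ((2:ℂ)^n) ^ (-(1/2 : ℂ)) = _
    rw [hr0, Complex.ofReal_cpow (by positivity) (-(1/2))]
    push_cast
    norm_num
  have hCexp : NormedSpace.exp ((-(Complex.I * ↑γ)) • C_T)
      = Matrix.diagonal (fun z => if z ∈ T then q else 1) := by
    rw [hC]
    have h1 : (-(Complex.I * ↑γ)) • Matrix.diagonal (fun z => if z ∈ T then (1:ℂ) else 0)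
        = Matrix.diagonal (fun z => if z ∈ T then -(Complex.I * ↑γ) else 0) := by
      ext i j
      rcases eq_or_ne i j with rfl | hij
      · rw [Matrix.smul_apply, Matrix.diagonal_apply_eq, Matrix.diagonal_apply_eq]
        by_cases hi : i ∈ T <;> simp [hi]
      · rw [Matrix.smul_apply, Matrix.diagonal_apply_ne _ hij, Matrix.diagonal_apply_ne _ hij,
          smul_zero]
    rw [h1, Matrix.exp_diagonal, Pi.exp_def]
    refine congrArg Matrix.diagonal ?_
    funext z
    by_cases hz : z ∈ T
    · rw [if_pos hz, if_pos hz, hq, Complex.exp_eq_exp_ℂ]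
    · rw [if_neg hz, if_neg hz, NormedSpace.exp_zero]
  have hv : NormedSpace.exp ((-(Complex.I * ↑γ)) • C_T) *ᵥ u
      = fun z => (if z ∈ T then q else 1) * (r0 : ℂ) := by
    funext z
    rw [hCexp, Matrix.mulVec_diagonal, hu z]
  have hψ : ∀ w, ψ w = (r0 : ℂ) * c w := by
    intro w
    show (NormedSpace.exp ((-(Complex.I * ↑β)) • X) *ᵥ
        (NormedSpace.exp ((-(Complex.I * ↑γ)) • C_T) *ᵥ u)) w = _
    rw [hv]
    show ∑ z, NormedSpace.exp ((-(Complex.I * ↑β)) • X) w z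
        * ((if z ∈ T then q else 1) * (r0:ℂ)) = _
    have hent : ∀ z, NormedSpace.exp ((-(Complex.I * ↑β)) • X) w z
        = fn β (hammingDist z w) := by
      intro z
      rw [hX, exp_X_apply, hammingDist_comm w z]
    have hsplit : ∑ z, NormedSpace.exp ((-(Complex.I * ↑β)) • X) w z
          * ((if z ∈ T then q else 1) * (r0:ℂ))
        = ∑ z, (r0:ℂ) * (fn β (hammingDist z w)
            + (q-1) * (if z ∈ T then fn β (hammingDist z w) else 0)) := by
      refine Finset.sum_congr rfl fun z _ => ?_
      rw [hent z]
      by_cases hz : z ∈ T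
      · rw [if_pos hz, if_pos hz]; ring
      · rw [if_neg hz, if_neg hz]; ring
    rw [hsplit, ← Finset.mul_sum]
    congr 1
    rw [Finset.sum_add_distrib, ← Finset.mul_sum, Finset.sum_ite_mem, Finset.univ_inter]
    rw [sum_fn (fun d => fn β d) w Finset.univ, sum_fn (fun d => fn β d) w T]
    show _ = ∑ d ∈ Finset.range (n + 1),
        (((T.filter (fun z => hammingDist z w = d)).card : ℂ) * (q - 1)
          + (n.choose d : ℂ)) * fn β d
    rw [Finset.mul_sum, ← Finset.sum_add_distrib]
    refine Finset.sum_congr rfl fun d _ => ?_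
    rw [card_hammingDist_eq]
    ring
  have hCψ : ∀ z, (C_T *ᵥ ψ) z = (if z ∈ T then 1 else 0) * ψ z := by
    intro z
    rw [hC, Matrix.mulVec_diagonal]
  have hr02 : r0 * r0 = 1 / 2^n := by
    rw [hr0, ← Real.rpow_add (by positivity)]
    norm_num
    rw [Real.rpow_neg_one]
  calc (star ψ) ⬝ᵥ (C_T *ᵥ ψ)
      = ∑ z, (if z ∈ T then ((1/2^n * Complex.normSq (c z) : ℝ) : ℂ) else 0) := by
        rw [dotProduct]
        refine Finset.sum_congr rfl fun z _ => ?_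
        rw [hCψ z, Pi.star_apply, Complex.star_def]
        by_cases hz : z ∈ T
        · rw [if_pos hz, if_pos hz, one_mul, mul_comm _ (ψ z), Complex.mul_conj, hψ z,
            Complex.normSq_mul, Complex.normSq_ofReal, hr02]
        · rw [if_neg hz, if_neg hz, zero_mul, mul_zero]
    _ = _ := by
        rw [Finset.sum_ite_mem, Finset.univ_inter]
        push_cast
        rw [Finset.mul_sum]
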